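/- For every real q with 0 < q < 1, integers α ≥ 1 and n ≥ 0, every real x ≥ 0, every odd positive integer d and Dirichlet character χ modulo d, Ẽ^χ_{n,q}(x|α) = ( [2:q] / ( [α:q]^n (1−q)^n ) ) · Σ_{j=0}^{n} C(n,j) (−1)^j q^{α j x} · Σ_{l=0}^{d−1} χ(l) q^l (−1)^l q^{α j l} / ( q^{(α j + 1)d} + 1 ). -/

import Mathlib

open scoped BigOperators

/-- `[x:q] = (q^x - 1)/(q - 1)` with real exponentiation. -/
noncomputable def qNum (q x : ℝ) : ℝ := (q ^ x - 1) / (q - 1)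

/-- Dirichlet-type weighted `q`-Euler polynomial
`Ẽ^χ_{n,q}(x|α) = [2:q] ∑_{m≥0} q^m χ(m) (-1)^m [x+m:q^α]^n`. -/
noncomputable def qEulerChi (q : ℝ) (d : ℕ) (χ : DirichletCharacter ℂ d) (α n : ℕ)
    (x : ℝ) : ℂ :=
  (qNum q 2 : ℂ) *
    ∑' m : ℕ, (q : ℂ) ^ m * χ (m : ZMod d) * (-1 : ℂ) ^ m *
      ((qNum (q ^ α) (x + (m : ℝ)) : ℝ) : ℂ) ^ n

lemma aux_summable (d : ℕ) (χ : DirichletCharacter ℂ d) (w : ℂ) (hw : ‖w‖ < 1) :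
    Summable fun m : ℕ => χ (m : ZMod d) * w ^ m := by
  apply Summable.of_norm_bounded (summable_geometric_of_lt_one (norm_nonneg w) hw)
  intro m
  rw [norm_mul, norm_pow]
  exact mul_le_of_le_one_left (by positivity) (χ.norm_le_one _)

lemma char_geom (d : ℕ) (hd0 : 0 < d) (χ : DirichletCharacter ℂ d) (w : ℂ) (hw : ‖w‖ < 1) :
    ∑' m : ℕ, χ (m : ZMod d) * w ^ m =
      (∑ l ∈ Finset.range d, χ (l : ZMod d) * w ^ l) * (1 - w ^ d)⁻¹ := by
  have hs := aux_summable d χ w hw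
  have hwd : ‖w ^ d‖ < 1 := by
    rw [norm_pow]; exact pow_lt_one₀ (norm_nonneg w) hw hd0.ne'
  have hne : 1 - w ^ d ≠ 0 := by
    intro h
    have : w ^ d = 1 := by linear_combination -h
    rw [this] at hwd; simp at hwd
  have key := Summable.sum_add_tsum_nat_add d hs
  have hshift : (∑' m : ℕ, χ ((↑(m + d) : ZMod d)) * w ^ (m + d)) =
      w ^ d * ∑' m : ℕ, χ (m : ZMod d) * w ^ m := by
    rw [← tsum_mul_left]
    congr 1; funext m
    have hc : ((↑(m + d) : ZMod d)) = (m : ZMod d) := by push_cast; simp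
    rw [hc, pow_add]; ring
  rw [hshift] at key
  have : (1 - w ^ d) * (∑' m : ℕ, χ (m : ZMod d) * w ^ m)
      = ∑ l ∈ Finset.range d, χ (l : ZMod d) * w ^ l := by linear_combination -key
  rw [← this, mul_comm (1 - w ^ d), mul_inv_cancel_right₀ hne]

lemma qnum_pow_expand (q : ℝ) (hq0 : 0 < q) (hq1 : q < 1) (α : ℕ) (hα : 1 ≤ α)
    (n : ℕ) (y : ℝ) :
    qNum (q ^ α) y ^ n =
      ∑ j ∈ Finset.range (n + 1), (n.choose j : ℝ) * (-1 : ℝ) ^ j * q ^ ((α : ℝ) * y * j)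
        * ((1 - q ^ α)⁻¹) ^ n := by
  have hb0 : (0:ℝ) < q ^ α := pow_pos hq0 α
  have hb1 : q ^ α < 1 := pow_lt_one₀ hq0.le hq1 (by omega)
  have hne : (q:ℝ) ^ α - 1 ≠ 0 := by nlinarith
  have hne2 : (1:ℝ) - q ^ α ≠ 0 := by nlinarith
  have h1 : qNum (q ^ α) y = (1 - ((q:ℝ) ^ α) ^ y) * (1 - q ^ α)⁻¹ := by
    unfold qNum
    rw [div_eq_mul_inv]
    field_simp
    ring
  rw [h1, mul_pow, ← Finset.sum_mul]
  congr 1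
  have h2 : (1 : ℝ) - ((q : ℝ) ^ α) ^ y = (-(((q:ℝ) ^ α) ^ y)) + 1 := by ring
  rw [h2, add_pow]
  apply Finset.sum_congr rfl
  intro j hj
  rw [one_pow, mul_one, neg_pow]
  have h3 : (((q : ℝ) ^ α) ^ y) ^ j = q ^ ((α : ℝ) * y * j) := by
    rw [← Real.rpow_natCast (((q:ℝ) ^ α) ^ y) j, ← Real.rpow_mul hb0.le,
        ← Real.rpow_natCast q α, ← Real.rpow_mul hq0.le]
    congr 1
    ring
  rw [h3]
  ring

theorem statement7 (q : ℝ) (hq0 : 0 < q) (hq1 : q < 1)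
    (α : ℕ) (hα : 1 ≤ α) (n : ℕ) (x : ℝ) (hx : 0 ≤ x)
    (d : ℕ) (hd0 : 0 < d) (hdo : Odd d) (χ : DirichletCharacter ℂ d) :
    qEulerChi q d χ α n x =
      ((qNum q 2 / (qNum q α ^ n * (1 - q) ^ n) : ℝ) : ℂ) *
        ∑ j ∈ Finset.range (n + 1),
          (n.choose j : ℂ) * (-1 : ℂ) ^ j * ((q ^ ((↑(α * j) : ℝ) * x) : ℝ) : ℂ) *
            ∑ l ∈ Finset.range d,
              χ (l : ZMod d) * (q : ℂ) ^ l * (-1 : ℂ) ^ l * (q : ℂ) ^ (α * j * l) /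
                ((q : ℂ) ^ ((α * j + 1) * d) + 1) := by
  have hb1 : q ^ α < 1 := pow_lt_one₀ hq0.le hq1 (by omega)
  set w : ℕ → ℂ := fun j => -((q : ℂ) ^ (α * j + 1)) with hwdef
  set c : ℕ → ℂ := fun j => (n.choose j : ℂ) * (-1 : ℂ) ^ j *
      ((q ^ ((↑(α * j) : ℝ) * x) : ℝ) : ℂ) * ((((1 - q ^ α)⁻¹) ^ n : ℝ) : ℂ) with hcdef
  have hwnorm : ∀ j : ℕ, ‖w j‖ < 1 := by
    intro j
    simp only [hwdef, norm_neg, norm_pow, Complex.norm_real, Real.norm_eq_abs,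
      abs_of_pos hq0]
    exact pow_lt_one₀ hq0.le hq1 (by omega)
  -- split of the rpow exponent
  have h4 : ∀ j m : ℕ, (q : ℝ) ^ ((α : ℝ) * (x + (m:ℝ)) * (j:ℝ)) =
      q ^ ((↑(α * j) : ℝ) * x) * q ^ (α * j * m) := by
    intro j m
    rw [← Real.rpow_natCast q (α * j * m), ← Real.rpow_add hq0]
    congr 1
    push_cast
    ring
  have hpt : ∀ m : ℕ, (q : ℂ) ^ m * χ (m : ZMod d) * (-1 : ℂ) ^ m *
      ((qNum (q ^ α) (x + (m : ℝ)) : ℝ) : ℂ) ^ n =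
      ∑ j ∈ Finset.range (n + 1), c j * (χ (m : ZMod d) * (w j) ^ m) := by
    intro m
    rw [show (((qNum (q ^ α) (x + (m:ℝ)) : ℝ)) : ℂ) ^ n
        = ((qNum (q ^ α) (x + (m:ℝ)) ^ n : ℝ) : ℂ) by rw [Complex.ofReal_pow],
      qnum_pow_expand q hq0 hq1 α hα n (x + m)]
    simp only [h4]
    push_cast
    rw [Finset.mul_sum]
    apply Finset.sum_congr rfl
    intro j hj
    have hwm : (w j) ^ m = (-1 : ℂ) ^ m * ((q : ℂ) ^ (α * j * m) * (q : ℂ) ^ m) := by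
      rw [hwdef]
      simp only
      rw [neg_pow, ← pow_mul, show (α * j + 1) * m = α * j * m + m by ring, pow_add]
    rw [hcdef]
    simp only
    rw [hwm]
    push_cast
    ring
  have hsum : ∀ j : ℕ, Summable (fun m : ℕ => c j * (χ (m : ZMod d) * (w j) ^ m)) :=
    fun j => (aux_summable d χ (w j) (hwnorm j)).mul_left _
  unfold qEulerChi
  rw [tsum_congr hpt, Summable.tsum_finsetSum (fun j _ => hsum j)]
  have hinner : ∀ j ∈ Finset.range (n + 1),
      (∑' m : ℕ, c j * (χ (m : ZMod d) * (w j) ^ m)) =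
      c j * ((∑ l ∈ Finset.range d, χ (l : ZMod d) * (w j) ^ l) * (1 - (w j) ^ d)⁻¹) := by
    intro j _
    rw [tsum_mul_left, char_geom d hd0 χ (w j) (hwnorm j)]
  rw [Finset.sum_congr rfl hinner]
  -- constant identity
  have hqne : q - 1 ≠ 0 := by linarith
  have hqa : qNum q α * (1 - q) = 1 - q ^ α := by
    unfold qNum
    rw [Real.rpow_natCast]
    field_simp
    ring
  have hconst : ((qNum q 2 / (qNum q α ^ n * (1 - q) ^ n) : ℝ) : ℂ) =
      (qNum q 2 : ℂ) * ((((1 - q ^ α)⁻¹) ^ n : ℝ) : ℂ) := by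
    rw [show qNum q α ^ n * (1 - q) ^ n = (1 - q ^ α) ^ n by rw [← mul_pow, hqa],
      div_eq_mul_inv, ← inv_pow, Complex.ofReal_mul]
  rw [hconst, mul_assoc]
  congr 1
  rw [Finset.mul_sum]
  apply Finset.sum_congr rfl
  intro j _
  have hden : ((q : ℂ) ^ ((α * j + 1) * d) + 1) = 1 - (w j) ^ d := by
    rw [hwdef]
    simp only
    rw [hdo.neg_pow, ← pow_mul]
    ring
  have hwl : ∀ l : ℕ, χ (l : ZMod d) * (q : ℂ) ^ l * (-1 : ℂ) ^ l * (q : ℂ) ^ (α * j * l)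
      = χ (l : ZMod d) * (w j) ^ l := by
    intro l
    have hwl' : (w j) ^ l = (-1 : ℂ) ^ l * ((q : ℂ) ^ (α * j * l) * (q : ℂ) ^ l) := by
      rw [hwdef]
      simp only
      rw [neg_pow, ← pow_mul, show (α * j + 1) * l = α * j * l + l by ring, pow_add]
    rw [hwl']
    ring
  simp only [hwl, hden, div_eq_mul_inv]
  rw [← Finset.sum_mul, hcdef]
  simp only
  ring
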